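/- Let d ≥ 1, λ > 0, and 1 < p < ∞. The function s ↦ (1+|s|)^{-λ-1-(d-1)/2} belongs to the weak Lorentz space L^{p,∞}(ℝ, (1+|r|)^{d-1} dr) if and only if λ ≥ d/p - (d+1)/2. -/

import Mathlib

open MeasureTheory Set
open scoped ENNReal NNReal

/-- Decreasing rearrangement of `f` with respect to the measure `μ`. -/
noncomputable def rearrangement {α : Type*} [MeasurableSpace α] (μ : Measure α)
    {E : Type*} [NormedAddCommGroup E] (f : α → E) (t : ℝ) : ℝ≥0∞ :=
  sInf {s : ℝ≥0∞ | μ {x | s < (‖f x‖₊ : ℝ≥0∞)} ≤ ENNReal.ofReal t}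

/-- Lorentz space quasinorm `‖f‖_{L^{p,ν}(μ)}`. -/
noncomputable def lorentzNorm {α : Type*} [MeasurableSpace α] (μ : Measure α)
    {E : Type*} [NormedAddCommGroup E] (p : ℝ) (ν : ℝ≥0∞) (f : α → E) : ℝ≥0∞ :=
  if ν = ∞ then ⨆ t ∈ Set.Ioi (0:ℝ), ENNReal.ofReal (t ^ (1/p)) * rearrangement μ f t
  else (∫⁻ t in Set.Ioi (0:ℝ),
      (ENNReal.ofReal (t ^ (1/p)) * rearrangement μ f t) ^ ν.toReal / ENNReal.ofReal t) ^ (1/ν.toReal)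

lemma L1 (n : ℕ) (R : ℝ) (hR : 0 ≤ R) :
    ∫⁻ x in Set.Ioo (-R) R, ENNReal.ofReal ((1 + |x|) ^ n) =
      ENNReal.ofReal (2 * ((1 + R) ^ (n + 1) - 1) / (n + 1)) := by
  have hcont : Continuous fun x : ℝ => (1 + |x|) ^ n :=
    (continuous_const.add continuous_abs).pow n
  have hint : IntegrableOn (fun x : ℝ => (1 + |x|) ^ n) (Set.Ioo (-R) R) volume :=
    hcont.integrableOn_Icc.mono_set Set.Ioo_subset_Icc_self
  rw [← MeasureTheory.ofReal_integral_eq_lintegral_ofReal hint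
      (Filter.Eventually.of_forall fun x => by positivity)]
  congr 1
  have h1 : ∫ x in Set.Ioo (-R) R, (1 + |x|) ^ n = ∫ x in (-R)..R, (1 + |x|) ^ n := by
    rw [intervalIntegral.integral_of_le (by linarith), integral_Ioc_eq_integral_Ioo]
  rw [h1, ← intervalIntegral.integral_add_adjacent_intervals (a := -R) (b := 0) (c := R)
      (hcont.intervalIntegrable _ _) (hcont.intervalIntegrable _ _)]
  have h2 : ∫ x in (-R)..(0:ℝ), (1 + |x|) ^ n = ∫ x in (-R)..(0:ℝ), (1 - x) ^ n := by
    apply intervalIntegral.integral_congr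
    intro x hx
    rw [Set.uIcc_of_le (by linarith)] at hx
    simp only [abs_of_nonpos hx.2]
    ring_nf
  have h3 : ∫ x in (0:ℝ)..R, (1 + |x|) ^ n = ∫ x in (0:ℝ)..R, (1 + x) ^ n := by
    apply intervalIntegral.integral_congr
    intro x hx
    rw [Set.uIcc_of_le hR] at hx
    simp only [abs_of_nonneg hx.1]
  rw [h2, h3]
  have h4 : ∫ x in (-R)..(0:ℝ), (1 - x) ^ n = ((1+R) ^ (n+1) - 1 ^ (n+1)) / (n+1) := by
    have := intervalIntegral.integral_comp_sub_left (a := -R) (b := 0) (fun y : ℝ => y ^ n) 1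
    rw [this]
    have : (1:ℝ) - -R = 1 + R := by ring
    rw [this, integral_pow]
    norm_num
  have h5 : ∫ x in (0:ℝ)..R, (1 + x) ^ n = ((1+R) ^ (n+1) - 1 ^ (n+1)) / (n+1) := by
    have := intervalIntegral.integral_comp_add_left (a := 0) (b := R) (fun y : ℝ => y ^ n) 1
    rw [this]
    simp only [add_zero]
    rw [integral_pow]
  rw [h4, h5]
  ring

lemma Lrpow (a y b : ℝ) (ha : 0 < a) (hy : 0 < y) (hb : 0 < b) :
    a < y ^ (-b) ↔ y < a ^ (-b⁻¹) := by
  rw [Real.lt_rpow_iff_log_lt ha hy,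
    ← Real.log_lt_log_iff hy (Real.rpow_pos_of_pos ha _), Real.log_rpow ha]
  constructor
  · intro h
    have h2 : b⁻¹ * Real.log a < b⁻¹ * (-b * Real.log y) :=
      mul_lt_mul_of_pos_left h (inv_pos.mpr hb)
    have h3 : b⁻¹ * (-b * Real.log y) = -Real.log y := by field_simp
    rw [h3] at h2
    linarith
  · intro h
    have h2 : b * Real.log y < b * (-b⁻¹ * Real.log a) := mul_lt_mul_of_pos_left h hb
    have h3 : b * (-b⁻¹ * Real.log a) = -Real.log a := by field_simp
    rw [h3] at h2
    linarith

lemma L3 (a b : ℝ) (ha : 0 < a) (hb : 0 < b) :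
    {x : ℝ | a < (1 + |x|) ^ (-b)} = Set.Ioo (-(a ^ (-b⁻¹) - 1)) (a ^ (-b⁻¹) - 1) := by
  ext x
  have h0 : (0:ℝ) < 1 + |x| := by positivity
  simp only [Set.mem_setOf_eq, Set.mem_Ioo, Lrpow a (1 + |x|) b ha h0 hb]
  rw [← abs_lt (a := x)]
  constructor <;> intro h <;> linarith

lemma L2 (d : ℕ) (hd : 1 ≤ d) (R : ℝ) (hR : 0 ≤ R) :
    ((volume : Measure ℝ).withDensity fun r => ENNReal.ofReal ((1 + |r|) ^ (d - 1)))
        (Set.Ioo (-R) R) = ENNReal.ofReal (2 * ((1 + R) ^ d - 1) / d) := by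
  have e : d - 1 + 1 = d := Nat.succ_pred_eq_of_pos hd
  rw [MeasureTheory.withDensity_apply _ measurableSet_Ioo, L1 (d-1) R hR, e]
  congr 1
  rw [Nat.cast_pred hd]
  ring

lemma L4 (d : ℕ) (hd : 1 ≤ d) (b : ℝ) (hb : 0 < b) (a : ℝ) (ha0 : 0 < a) (ha1 : a < 1) :
    ((volume : Measure ℝ).withDensity fun r => ENNReal.ofReal ((1 + |r|) ^ (d - 1)))
        {x : ℝ | ENNReal.ofReal a < (‖(1 + |x|) ^ (-b)‖₊ : ℝ≥0∞)} =
      ENNReal.ofReal (2 * ((a ^ (-b⁻¹)) ^ d - 1) / d) := by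
  have hset : {x : ℝ | ENNReal.ofReal a < (‖(1 + |x|) ^ (-b)‖₊ : ℝ≥0∞)}
      = {x : ℝ | a < (1 + |x|) ^ (-b)} := by
    ext x
    have h0 : (0:ℝ) < 1 + |x| := by positivity
    rw [Set.mem_setOf_eq, Set.mem_setOf_eq,
      ← enorm_eq_nnnorm, Real.enorm_eq_ofReal (Real.rpow_nonneg h0.le _),
      ENNReal.ofReal_lt_ofReal_iff (Real.rpow_pos_of_pos h0 _)]
  have hR : (0:ℝ) ≤ a ^ (-b⁻¹) - 1 := by
    have : 1 < a ^ (-b⁻¹) := by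
      rw [Real.one_lt_rpow_iff_of_pos ha0]
      right
      exact ⟨ha1, by simp [inv_pos.mpr hb]⟩
    linarith
  rw [hset, L3 a b ha0 hb, L2 d hd _ hR]
  congr 3
  ring

lemma L5 (d : ℕ) (hd : 1 ≤ d) (b : ℝ) (hb : 0 < b) (t : ℝ) (ht : 0 < t) :
    rearrangement
        ((volume : Measure ℝ).withDensity fun r => ENNReal.ofReal ((1 + |r|) ^ (d - 1)))
        (fun s : ℝ => (1 + |s|) ^ (-b)) t
      = ENNReal.ofReal ((1 + (d:ℝ) * t / 2) ^ (-(b / (d:ℝ)))) := by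
  have hd0 : (0:ℝ) < d := by exact_mod_cast hd
  set X : ℝ := 1 + (d:ℝ) * t / 2 with hX
  have hX1 : 1 < X := by
    rw [hX]
    have : 0 < (d:ℝ) * t := mul_pos hd0 ht
    linarith
  have hX0 : 0 < X := lt_trans one_pos hX1
  set c : ℝ := X ^ (-(b / (d:ℝ))) with hc
  have hc0 : 0 < c := Real.rpow_pos_of_pos hX0 _
  have hc1 : c < 1 := Real.rpow_lt_one_of_one_lt_of_neg hX1 (neg_lt_zero.mpr (by positivity))
  have hbne : b ≠ 0 := hb.ne'
  have hdne : (d:ℝ) ≠ 0 := hd0.ne'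
  -- key : (c ^ (-b⁻¹)) ^ d = X, and more generally for the strict comparison
  have key : ∀ a : ℝ, 0 < a → (a ^ (-b⁻¹)) ^ d = a ^ (-b⁻¹ * d) := by
    intro a ha
    rw [← Real.rpow_natCast (a ^ (-b⁻¹)) d, ← Real.rpow_mul ha.le]
  have keyc : (c ^ (-b⁻¹)) ^ d = X := by
    rw [key c hc0, hc, ← Real.rpow_mul hX0.le]
    have : -(b / (d:ℝ)) * (-b⁻¹ * (d:ℝ)) = 1 := by field_simp
    rw [this, Real.rpow_one]
  have hval : (2 * ((c ^ (-b⁻¹)) ^ d - 1) / d : ℝ) = t := by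
    rw [keyc, hX]; field_simp; ring
  refine le_antisymm ?_ ?_
  · apply sInf_le
    rw [Set.mem_setOf_eq, L4 d hd b hb c hc0 hc1, hval]
  · apply le_sInf
    intro s hs
    by_contra hlt
    push_neg at hlt
    have hsne : s ≠ ⊤ := (hlt.trans_le le_top).ne
    set a : ℝ := s.toReal with ha
    have ha0 : 0 ≤ a := ENNReal.toReal_nonneg
    have hsa : s = ENNReal.ofReal a := (ENNReal.ofReal_toReal hsne).symm
    have hac : a < c := by
      have := ENNReal.toReal_strict_mono (by simp : ENNReal.ofReal c ≠ ⊤) hlt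
      rwa [ENNReal.toReal_ofReal hc0.le] at this
    set a' : ℝ := (a + c) / 2 with ha'
    have ha'0 : 0 < a' := by positivity
    have ha'c : a' < c := by rw [ha']; linarith
    have ha'1 : a' < 1 := ha'c.trans hc1
    have hXlt : X < (a' ^ (-b⁻¹)) ^ d := by
      rw [key a' ha'0, ← keyc, key c hc0]
      exact Real.rpow_lt_rpow_of_neg ha'0 ha'c
        (by rw [neg_mul]; exact neg_lt_zero.mpr (by positivity))
    have htlt : t < 2 * ((a' ^ (-b⁻¹)) ^ d - 1) / d := by
      rw [← hval, keyc]
      have h2 : 2 * (X - 1) < 2 * ((a' ^ (-b⁻¹)) ^ d - 1) := by linarith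
      exact (div_lt_div_iff_of_pos_right hd0).mpr h2
    have hmono : ((volume : Measure ℝ).withDensity fun r => ENNReal.ofReal ((1 + |r|) ^ (d - 1)))
          {x : ℝ | ENNReal.ofReal a' < (‖(1 + |x|) ^ (-b)‖₊ : ℝ≥0∞)}
        ≤ ((volume : Measure ℝ).withDensity fun r => ENNReal.ofReal ((1 + |r|) ^ (d - 1)))
          {x : ℝ | s < (‖(1 + |x|) ^ (-b)‖₊ : ℝ≥0∞)} := by
      apply measure_mono
      intro x hx
      have : s ≤ ENNReal.ofReal a' := by
        rw [hsa]; exact ENNReal.ofReal_le_ofReal (by rw [ha']; linarith)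
      exact lt_of_le_of_lt this hx
    rw [L4 d hd b hb a' ha'0 ha'1] at hmono
    have : ENNReal.ofReal t < ENNReal.ofReal (2 * ((a' ^ (-b⁻¹)) ^ d - 1) / d) :=
      (ENNReal.ofReal_lt_ofReal_iff (ht.trans htlt)).mpr htlt
    exact absurd (le_trans hmono hs) (not_le.mpr this)

lemma Lbound (d : ℕ) (hd : 1 ≤ d) (b p : ℝ) (hb : 0 < b) (hp : 1 < p)
    (h : 1/p ≤ b / (d:ℝ)) (t : ℝ) (ht : 0 < t) :
    t ^ (1/p) * (1 + (d:ℝ) * t / 2) ^ (-(b/(d:ℝ)))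
      ≤ max 1 (((d:ℝ)/2) ^ (-(b/(d:ℝ)))) := by
  have hd0 : (0:ℝ) < d := by exact_mod_cast hd
  have hp0 : (0:ℝ) < p := by linarith
  have he : -(b/(d:ℝ)) ≤ 0 := neg_nonpos.mpr (by positivity)
  rcases le_total t 1 with h1 | h1
  · refine le_trans ?_ (le_max_left _ _)
    have h2 : t ^ (1/p) ≤ 1 := Real.rpow_le_one ht.le h1 (by positivity)
    have h3 : (1 + (d:ℝ) * t / 2) ^ (-(b/(d:ℝ))) ≤ 1 :=
      Real.rpow_le_one_of_one_le_of_nonpos (by nlinarith) he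
    have h4 : (0:ℝ) ≤ (1 + (d:ℝ) * t / 2) ^ (-(b/(d:ℝ))) :=
      Real.rpow_nonneg (by nlinarith) _
    nlinarith [Real.rpow_nonneg ht.le (1/p)]
  · refine le_trans ?_ (le_max_right _ _)
    have hdt2 : (0:ℝ) < (d:ℝ) * t / 2 := by positivity
    have h2 : (1 + (d:ℝ) * t / 2) ^ (-(b/(d:ℝ))) ≤ ((d:ℝ) * t / 2) ^ (-(b/(d:ℝ))) :=
      Real.rpow_le_rpow_of_nonpos hdt2 (by linarith) he
    have h3 : ((d:ℝ) * t / 2) ^ (-(b/(d:ℝ)))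
        = ((d:ℝ)/2) ^ (-(b/(d:ℝ))) * t ^ (-(b/(d:ℝ))) := by
      rw [show (d:ℝ) * t / 2 = ((d:ℝ)/2) * t by ring,
        Real.mul_rpow (by positivity) ht.le]
    have h4 : t ^ (1/p) * t ^ (-(b/(d:ℝ))) = t ^ (1/p - b/(d:ℝ)) := by
      rw [← Real.rpow_add ht]; ring_nf
    have h5 : t ^ (1/p - b/(d:ℝ)) ≤ 1 :=
      Real.rpow_le_one_of_one_le_of_nonpos h1 (by linarith)
    have h6 : (0:ℝ) ≤ t ^ (1/p) := Real.rpow_nonneg ht.le _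
    have h7 : (0:ℝ) ≤ ((d:ℝ)/2) ^ (-(b/(d:ℝ))) := Real.rpow_nonneg (by positivity) _
    calc t ^ (1/p) * (1 + (d:ℝ) * t / 2) ^ (-(b/(d:ℝ)))
        ≤ t ^ (1/p) * (((d:ℝ)/2) ^ (-(b/(d:ℝ))) * t ^ (-(b/(d:ℝ)))) := by
          rw [← h3]; exact mul_le_mul_of_nonneg_left h2 h6
      _ = ((d:ℝ)/2) ^ (-(b/(d:ℝ))) * (t ^ (1/p) * t ^ (-(b/(d:ℝ)))) := by ring
      _ = ((d:ℝ)/2) ^ (-(b/(d:ℝ))) * t ^ (1/p - b/(d:ℝ)) := by rw [h4]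
      _ ≤ ((d:ℝ)/2) ^ (-(b/(d:ℝ))) * 1 := mul_le_mul_of_nonneg_left h5 h7
      _ = _ := mul_one _

lemma Lunbound (d : ℕ) (hd : 1 ≤ d) (b p : ℝ) (hb : 0 < b) (hp : 1 < p)
    (h : b / (d:ℝ) < 1/p) (M : ℝ) :
    ∃ t : ℝ, 0 < t ∧ M < t ^ (1/p) * (1 + (d:ℝ) * t / 2) ^ (-(b/(d:ℝ))) := by
  have hd0 : (0:ℝ) < d := by exact_mod_cast hd
  have hp0 : (0:ℝ) < p := by linarith
  obtain ⟨e, he⟩ : ∃ e : ℝ, e = -(b/(d:ℝ)) := ⟨_, rfl⟩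
  obtain ⟨ε, hε⟩ : ∃ ε : ℝ, ε = 1/p - b/(d:ℝ) := ⟨_, rfl⟩
  have hε0 : 0 < ε := by rw [hε]; linarith
  obtain ⟨K, hK⟩ : ∃ K : ℝ, K = max (M * (d:ℝ) ^ (b/(d:ℝ))) 1 := ⟨_, rfl⟩
  have hK1 : (1:ℝ) ≤ K := hK ▸ le_max_right _ _
  obtain ⟨t, htdef⟩ : ∃ t : ℝ, t = max (2/(d:ℝ)) (K ^ (1/ε)) + 1 := ⟨_, rfl⟩
  have hKε : (0:ℝ) < K ^ (1/ε) := Real.rpow_pos_of_pos (by linarith) _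
  have ht0 : 0 < t := by
    have h1 := le_max_right (2/(d:ℝ)) (K ^ (1/ε))
    rw [htdef]; linarith
  refine ⟨t, ht0, ?_⟩
  have htd : 2/(d:ℝ) ≤ t := by
    have h1 := le_max_left (2/(d:ℝ)) (K ^ (1/ε))
    rw [htdef]; linarith
  have htK : K ^ (1/ε) < t := by
    have h1 := le_max_right (2/(d:ℝ)) (K ^ (1/ε))
    rw [htdef]; linarith
  have h2dt : (2:ℝ) ≤ (d:ℝ) * t := by
    have h1 := mul_le_mul_of_nonneg_left htd hd0.le
    rw [mul_div_cancel₀ 2 hd0.ne'] at h1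
    linarith
  have hdt0 : (0:ℝ) < (d:ℝ) * t := by linarith
  have hstep1 : ((d:ℝ) * t) ^ e ≤ (1 + (d:ℝ) * t / 2) ^ e := by
    apply Real.rpow_le_rpow_of_nonpos (by linarith) (by linarith)
    rw [he]; simp only [neg_nonpos]; positivity
  have hstep2 : ((d:ℝ) * t) ^ e = (d:ℝ) ^ e * t ^ e :=
    Real.mul_rpow hd0.le ht0.le
  have hstep3 : t ^ (1/p) * t ^ e = t ^ ε := by
    rw [← Real.rpow_add ht0, hε, he]; ring_nf
  -- t ^ ε > K
  have htε : K < t ^ ε := by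
    have h1 : (K ^ (1/ε)) ^ ε < t ^ ε := Real.rpow_lt_rpow hKε.le htK hε0
    rwa [← Real.rpow_mul (by linarith : (0:ℝ) ≤ K), one_div,
      inv_mul_cancel₀ hε0.ne', Real.rpow_one] at h1
  have hde : (0:ℝ) < (d:ℝ) ^ e := Real.rpow_pos_of_pos hd0 _
  have hcancel : (d:ℝ) ^ e * (d:ℝ) ^ (b/(d:ℝ)) = 1 := by
    rw [← Real.rpow_add hd0, he]; simp
  have hMlt : M < (d:ℝ) ^ e * t ^ ε := by
    rcases le_or_gt M 0 with hM | hM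
    · exact lt_of_le_of_lt hM (by positivity)
    · have h1 : (d:ℝ) ^ e * K < (d:ℝ) ^ e * t ^ ε := by
        exact mul_lt_mul_of_pos_left htε hde
      have h2 : M * (d:ℝ) ^ (b/(d:ℝ)) ≤ K := hK ▸ le_max_left _ _
      have h3 : (d:ℝ) ^ e * (M * (d:ℝ) ^ (b/(d:ℝ))) ≤ (d:ℝ) ^ e * K :=
        mul_le_mul_of_nonneg_left h2 hde.le
      have h4 : (d:ℝ) ^ e * (M * (d:ℝ) ^ (b/(d:ℝ))) = M := by
        calc (d:ℝ) ^ e * (M * (d:ℝ) ^ (b/(d:ℝ)))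
            = M * ((d:ℝ) ^ e * (d:ℝ) ^ (b/(d:ℝ))) := by ring
          _ = M := by rw [hcancel, mul_one]
      linarith
  calc M < (d:ℝ) ^ e * t ^ ε := hMlt
    _ = (d:ℝ) ^ e * (t ^ (1/p) * t ^ e) := by rw [hstep3]
    _ = t ^ (1/p) * ((d:ℝ) ^ e * t ^ e) := by ring
    _ = t ^ (1/p) * ((d:ℝ) * t) ^ e := by rw [hstep2]
    _ ≤ t ^ (1/p) * (1 + (d:ℝ) * t / 2) ^ e :=
        mul_le_mul_of_nonneg_left hstep1 (Real.rpow_nonneg ht0.le _)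
    _ = t ^ (1/p) * (1 + (d:ℝ) * t / 2) ^ (-(b/(d:ℝ))) := by rw [he]

/-- The function `s ↦ (1+|s|)^{-λ-1-(d-1)/2}` belongs to the weak Lorentz space
`L^{p,∞}(ℝ, (1+|r|)^{d-1} dr)` if and only if `λ ≥ d/p - (d+1)/2`. -/
theorem mem_weak_Lp_iff (d : ℕ) (hd : 1 ≤ d) (lam : ℝ) (hlam : 0 < lam)
    (p : ℝ) (hp1 : 1 < p) :
    lorentzNorm
        ((volume : Measure ℝ).withDensity fun r => ENNReal.ofReal ((1 + |r|) ^ (d - 1)))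
        p ∞ (fun s : ℝ => (1 + |s|) ^ (-lam - 1 - ((d:ℝ) - 1) / 2)) < ∞ ↔
      (d:ℝ) / p - ((d:ℝ) + 1) / 2 ≤ lam := by
  have hd0 : (0:ℝ) < d := by exact_mod_cast hd
  have hp0 : (0:ℝ) < p := by linarith
  obtain ⟨b, hbdef⟩ : ∃ b : ℝ, b = lam + 1 + ((d:ℝ) - 1) / 2 := ⟨_, rfl⟩
  have hb : 0 < b := by
    have h1 : (1:ℝ) ≤ (d:ℝ) := by exact_mod_cast hd
    rw [hbdef]; linarith
  have hfe : (fun s : ℝ => (1 + |s|) ^ (-lam - 1 - ((d:ℝ) - 1) / 2))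
      = fun s : ℝ => (1 + |s|) ^ (-b) := by
    funext s; congr 1; rw [hbdef]; ring
  rw [hfe]
  rw [lorentzNorm, if_pos rfl]
  have hrw : ∀ t : ℝ, t ∈ Set.Ioi (0:ℝ) →
      ENNReal.ofReal (t ^ (1/p)) * rearrangement
        ((volume : Measure ℝ).withDensity fun r => ENNReal.ofReal ((1 + |r|) ^ (d - 1)))
        (fun s : ℝ => (1 + |s|) ^ (-b)) t
      = ENNReal.ofReal (t ^ (1/p) * (1 + (d:ℝ) * t / 2) ^ (-(b/(d:ℝ)))) := by
    intro t ht
    rw [L5 d hd b hb t ht, ← ENNReal.ofReal_mul (Real.rpow_nonneg (le_of_lt ht) _)]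
  rw [biSup_congr hrw]
  have hiff : (1/p ≤ b/(d:ℝ)) ↔ ((d:ℝ)/p - ((d:ℝ)+1)/2 ≤ lam) := by
    rw [div_le_div_iff₀ hp0 hd0, hbdef]
    constructor <;> intro h1
    · have h2 : (d:ℝ)/p ≤ lam + 1 + ((d:ℝ) - 1) / 2 := (div_le_iff₀ hp0).mpr (by linarith)
      linarith
    · have h2 : (d:ℝ)/p ≤ lam + 1 + ((d:ℝ) - 1) / 2 := by linarith
      have h3 := (div_le_iff₀ hp0).mp h2
      linarith
  rw [← hiff]
  constructor
  · intro hfin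
    by_contra hcon
    push_neg at hcon
    set S : ℝ≥0∞ := ⨆ t ∈ Set.Ioi (0:ℝ),
      ENNReal.ofReal (t ^ (1/p) * (1 + (d:ℝ) * t / 2) ^ (-(b/(d:ℝ)))) with hS
    obtain ⟨t, ht0, hgt⟩ := Lunbound d hd b p hb hp1 hcon S.toReal
    have hle2 : ENNReal.ofReal (t ^ (1/p) * (1 + (d:ℝ) * t / 2) ^ (-(b/(d:ℝ)))) ≤ S :=
      le_iSup₂ (f := fun t (_ : t ∈ Set.Ioi (0:ℝ)) =>
        ENNReal.ofReal (t ^ (1/p) * (1 + (d:ℝ) * t / 2) ^ (-(b/(d:ℝ))))) t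
        (Set.mem_Ioi.mpr ht0)
    have h3 := (ENNReal.ofReal_le_iff_le_toReal hfin.ne).mp hle2
    linarith
  · intro hle
    refine lt_of_le_of_lt (iSup₂_le fun t ht => ?_)
      (ENNReal.ofReal_lt_top (r := max 1 (((d:ℝ)/2) ^ (-(b/(d:ℝ))))))
    exact ENNReal.ofReal_le_ofReal (Lbound d hd b p hb hp1 hle t (Set.mem_Ioi.mp ht))
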